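/- Let q₁,...,q_k be the output of the greedy farthest-point algorithm on P ⊂ ℝ^d, let H be a (k−1)-dimensional linear subspace with dist(q_i, H) ≤ x/k for all i, and let G = span{q₁,...,q_k}. Then for every p ∈ P, the projection p_G of p onto G satisfies dist(p_G, H) ≤ 2^{k−1} x. -/

import Mathlib

abbrev Pt (d : ℕ) := EuclideanSpace ℝ (Fin d)

def IsGreedy {d k : ℕ} (P : Set (Pt d)) (q : Fin k → Pt d) : Prop :=
  ∀ i : Fin k, q i ∈ P ∧ ∀ p ∈ P,
    Metric.infDist p (Submodule.span ℝ (q '' {j | j < i}) : Set (Pt d)) ≤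
      Metric.infDist (q i) (Submodule.span ℝ (q '' {j | j < i}) : Set (Pt d))

open Metric Submodule

lemma infDist_eq_norm_sub_proj {d : ℕ} (K : Submodule ℝ (Pt d)) (y : Pt d) :
    Metric.infDist y (K : Set (Pt d)) = ‖y - orthogonalProjection K y‖ := by
  rw [Metric.infDist_eq_iInf, show ‖y - (orthogonalProjection K y : Pt d)‖ = ‖y - K.starProjection y‖ from rfl,
    starProjection_minimal]
  simp_rw [dist_eq_norm]
  rfl

lemma eq_orthogonalProjection_of_eq_submodule {d : ℕ} {K K' : Submodule ℝ (Pt d)}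
    (h : K = K') {u : Pt d} :
    (orthogonalProjection K u : Pt d) = (orthogonalProjection K' u : Pt d) := by
  subst h; rfl

lemma key_step {d : ℕ} (V : Submodule ℝ (Pt d)) (v p : Pt d)
    (h : Metric.infDist p (V : Set (Pt d)) ≤ Metric.infDist v (V : Set (Pt d))) :
    ∃ c : ℝ, |c| ≤ 1 ∧
      (orthogonalProjection (V ⊔ Submodule.span ℝ {v}) p : Pt d)
        = (orthogonalProjection V p : Pt d)
          + c • (v - (orthogonalProjection V v : Pt d)) := by
  set w : Pt d := v - (orthogonalProjection V v : Pt d) with hw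
  have hwperp : w ∈ Vᗮ := sub_starProjection_mem_orthogonal v
  set c : ℝ := (inner ℝ w p : ℝ) / (‖w‖ ^ 2) with hc
  have hnorm : ‖p - orthogonalProjection V p‖ ≤ ‖w‖ := by
    rw [← infDist_eq_norm_sub_proj]
    calc Metric.infDist p (V : Set (Pt d)) ≤ Metric.infDist v (V : Set (Pt d)) := h
      _ = ‖w‖ := infDist_eq_norm_sub_proj V v
  have hinner : |(inner ℝ w p : ℝ)| ≤ ‖w‖ ^ 2 := by
    have h1 : (inner ℝ w ((orthogonalProjection V p : Pt d)) : ℝ) = 0 := by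
      rw [real_inner_comm]
      exact hwperp _ (SetLike.coe_mem _)
    have h2 : (inner ℝ w p : ℝ) = inner ℝ w (p - (orthogonalProjection V p : Pt d)) := by
      rw [inner_sub_right, h1, sub_zero]
    rw [h2]
    calc |(inner ℝ w (p - (orthogonalProjection V p : Pt d)) : ℝ)|
        ≤ ‖w‖ * ‖p - (orthogonalProjection V p : Pt d)‖ := abs_real_inner_le_norm _ _
      _ ≤ ‖w‖ * ‖w‖ := by
          apply mul_le_mul_of_nonneg_left hnorm (norm_nonneg _)
      _ = ‖w‖ ^ 2 := by ring
  have hcle : |c| ≤ 1 := by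
    rcases eq_or_ne w 0 with hw0 | hw0
    · simp [hc, hw0]
    · have hpos : (0:ℝ) < ‖w‖ ^ 2 := pow_pos (norm_pos_iff.mpr hw0) 2
      rw [hc, abs_div, abs_of_pos hpos, div_le_one hpos]
      exact hinner
  refine ⟨c, hcle, ?_⟩
  have hcw : (inner ℝ w (c • w) : ℝ) = inner ℝ w p := by
    rcases eq_or_ne w 0 with hw0 | hw0
    · simp [hw0]
    · rw [real_inner_smul_right, real_inner_self_eq_norm_sq, hc,
        div_mul_cancel₀ _ (pow_ne_zero 2 (norm_ne_zero_iff.mpr hw0))]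
  apply eq_starProjection_of_mem_orthogonal
  · apply Submodule.add_mem
    · exact Submodule.mem_sup_left (SetLike.coe_mem _)
    · apply Submodule.smul_mem
      apply Submodule.sub_mem
      · exact Submodule.mem_sup_right (Submodule.mem_span_singleton_self v)
      · exact Submodule.mem_sup_left (SetLike.coe_mem _)
  · rw [Submodule.mem_orthogonal]
    intro z hz
    obtain ⟨a, ha, b, hb, rfl⟩ := Submodule.mem_sup.mp hz
    obtain ⟨r, rfl⟩ := Submodule.mem_span_singleton.mp hb
    have hdecomp : p - ((orthogonalProjection V p : Pt d) + c • w)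
        = (p - (orthogonalProjection V p : Pt d)) - c • w := by abel
    have hVzero : ∀ z' ∈ V,
        (inner ℝ z' (p - ((orthogonalProjection V p : Pt d) + c • w)) : ℝ) = 0 := by
      intro z' hz'
      rw [hdecomp, inner_sub_right]
      have e1 : (inner ℝ z' (p - (orthogonalProjection V p : Pt d)) : ℝ) = 0 := by
        rw [real_inner_comm]
        exact starProjection_inner_eq_zero p z' hz'
      have e2 : (inner ℝ z' (c • w) : ℝ) = 0 := by
        rw [real_inner_smul_right, hwperp z' hz', mul_zero]
      rw [e1, e2, sub_zero]
    have hwzero : (inner ℝ w (p - ((orthogonalProjection V p : Pt d) + c • w)) : ℝ) = 0 := by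
      rw [hdecomp, inner_sub_right, inner_sub_right]
      have h1 : (inner ℝ w ((orthogonalProjection V p : Pt d)) : ℝ) = 0 := by
        rw [real_inner_comm]
        exact hwperp _ (SetLike.coe_mem _)
      rw [h1, hcw]
      ring
    have hv' : v = (orthogonalProjection V v : Pt d) + w := by rw [hw]; abel
    have hra : (inner ℝ a (p - ((orthogonalProjection V p : Pt d) + c • w)) : ℝ) = 0 :=
      hVzero a ha
    have hrv : (inner ℝ v (p - ((orthogonalProjection V p : Pt d) + c • w)) : ℝ) = 0 := by
      rw [hv', inner_add_left, hVzero _ (SetLike.coe_mem _), hwzero, add_zero]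
    rw [inner_add_left, hra, real_inner_smul_left, hrv, mul_zero, add_zero]

lemma greedy_rep {d k : ℕ} (P : Set (Pt d)) (q : Fin k → Pt d) (hg : IsGreedy P q) :
    ∀ t, t ≤ k → ∀ p ∈ P, ∃ α : Fin k → ℝ,
      (∀ j : Fin k, t ≤ (j : ℕ) → α j = 0) ∧ (∀ j, |α j| ≤ 2 ^ (t - 1)) ∧
      ((orthogonalProjection (Submodule.span ℝ (q '' {j : Fin k | (j : ℕ) < t})) p : Pt d)
        = ∑ j, α j • q j) := by
  intro t
  induction t with
  | zero =>
    intro _ p _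
    refine ⟨0, fun j _ => rfl, fun j => by simp, ?_⟩
    have hset : Submodule.span ℝ (q '' {j : Fin k | (j : ℕ) < 0}) = (⊥ : Submodule ℝ (Pt d)) := by
      have : (q '' {j : Fin k | (j : ℕ) < 0}) = ∅ := by simp
      rw [this, Submodule.span_empty]
    rw [eq_orthogonalProjection_of_eq_submodule hset]
    simp [orthogonalProjection_bot]
  | succ t ih =>
    intro ht p hp
    have htk : t < k := lt_of_lt_of_le (Nat.lt_succ_self t) ht
    set i : Fin k := ⟨t, htk⟩ with hi
    set V := Submodule.span ℝ (q '' {j : Fin k | (j : ℕ) < t}) with hV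
    have hset : {j : Fin k | j < i} = {j : Fin k | (j : ℕ) < t} := by
      ext j; simp [Fin.lt_def, hi]
    have hgr : Metric.infDist p (V : Set (Pt d)) ≤ Metric.infDist (q i) (V : Set (Pt d)) := by
      have := (hg i).2 p hp
      rwa [hset] at this
    obtain ⟨α, hα0, hαb, hαe⟩ := ih (le_of_lt ht) p hp
    obtain ⟨β, hβ0, hβb, hβe⟩ := ih (le_of_lt ht) (q i) (hg i).1
    obtain ⟨c, hc, hproj⟩ := key_step V (q i) p hgr
    have hsub : Submodule.span ℝ (q '' {j : Fin k | (j : ℕ) < t + 1})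
        = V ⊔ Submodule.span ℝ {q i} := by
      have hs : {j : Fin k | (j : ℕ) < t + 1} = {j : Fin k | (j : ℕ) < t} ∪ {i} := by
        ext j
        simp only [Set.mem_setOf_eq, Set.mem_union, Set.mem_singleton_iff,
          Nat.lt_succ_iff_lt_or_eq, Fin.ext_iff, hi]
      rw [hs, Set.image_union, Set.image_singleton, Submodule.span_union]
    refine ⟨fun j => (if j = i then c else 0) + α j - c * β j, ?_, ?_, ?_⟩
    · intro j hj
      beta_reduce
      have hji : j ≠ i := by
        intro h; rw [h, hi] at hj; simp at hj
      rw [hα0 j (by omega), hβ0 j (by omega), if_neg hji]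
      ring
    · intro j
      beta_reduce
      have h2t : (1:ℝ) ≤ 2 ^ t := one_le_pow₀ (by norm_num)
      rcases eq_or_ne j i with hj | hj
      · rw [hj, hα0 i (by simp [hi]), hβ0 i (by simp [hi]), if_pos rfl]
        simpa using le_trans hc h2t
      · rw [if_neg hj, zero_add]
        rcases Nat.eq_zero_or_pos t with ht0 | ht0
        · rw [hα0 j (by omega), hβ0 j (by omega)]
          simp
        · calc |α j - c * β j| ≤ |α j| + |c * β j| := abs_sub _ _
            _ ≤ 2 ^ (t-1) + |c| * |β j| := by rw [abs_mul]; exact add_le_add (hαb j) le_rfl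
            _ ≤ 2 ^ (t-1) + 1 * 2 ^ (t-1) := by
                apply add_le_add le_rfl
                exact mul_le_mul hc (hβb j) (abs_nonneg _) zero_le_one
            _ = 2 ^ (t-1) + 2 ^ (t-1) := by ring
            _ = 2 ^ t := by
                rw [← two_mul, ← pow_succ']
                congr 1
                omega
            _ = 2 ^ (t + 1 - 1) := by norm_num
    · have hsum : ∑ j, ((if j = i then c else 0) + α j - c * β j) • q j
          = (∑ j, α j • q j) + c • (q i - ∑ j, β j • q j) := by
        simp only [add_smul, sub_smul, mul_smul, Finset.sum_add_distrib,
          Finset.sum_sub_distrib, ite_smul, zero_smul, Finset.sum_ite_eq',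
          Finset.mem_univ, if_true, smul_sub, ← Finset.smul_sum]
        abel
      beta_reduce
      rw [eq_orthogonalProjection_of_eq_submodule hsub, hproj, hαe, hβe]
      exact hsum.symm

/-- If `q` is the greedy output on `P`, `H` is a `(k-1)`-dimensional subspace with
`dist(q i, H) ≤ x/k` for all `i`, and `G = span{q 0, …, q (k-1)}`, then for every
`p ∈ P`, the projection `p_G` of `p` onto `G` satisfies `dist(p_G, H) ≤ 2^{k-1} x`. -/
theorem greedy_projection_dirHeight {d k : ℕ} (P : Set (Pt d)) (q : Fin k → Pt d)
    (hg : IsGreedy P q) (H : Submodule ℝ (Pt d)) (hH : Module.finrank ℝ H = k - 1)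
    (x : ℝ) (hx : 0 < x)
    (hd : ∀ i, Metric.infDist (q i) (H : Set (Pt d)) ≤ x / k)
    (p : Pt d) (hp : p ∈ P) :
    Metric.infDist ((orthogonalProjection (Submodule.span ℝ (Set.range q)) p : Pt d))
      (H : Set (Pt d)) ≤ 2 ^ (k - 1) * x := by
  rcases Nat.eq_zero_or_pos k with hk | hk
  · subst hk
    have hr : Set.range q = ∅ := Set.range_eq_empty q
    have hbot : Submodule.span ℝ (Set.range q) = (⊥ : Submodule ℝ (Pt d)) := by
      rw [hr, Submodule.span_empty]
    rw [eq_orthogonalProjection_of_eq_submodule hbot]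
    have : ((orthogonalProjection (⊥ : Submodule ℝ (Pt d)) p : Pt d)) = 0 := by
      simp [orthogonalProjection_bot]
    rw [this, Metric.infDist_zero_of_mem H.zero_mem]
    positivity
  · have hrange : q '' {j : Fin k | (j : ℕ) < k} = Set.range q := by
      have : {j : Fin k | (j : ℕ) < k} = Set.univ := by
        ext j; simp [j.isLt]
      rw [this, Set.image_univ]
    obtain ⟨α, h0, hb, he⟩ := greedy_rep P q hg k le_rfl p hp
    rw [eq_orthogonalProjection_of_eq_submodule
      (congrArg (Submodule.span ℝ) hrange.symm), he]
    set y : Pt d := ∑ j, α j • (orthogonalProjection H (q j) : Pt d) with hy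
    have hyH : y ∈ H :=
      Submodule.sum_mem _ fun j _ => Submodule.smul_mem _ _ (SetLike.coe_mem _)
    calc Metric.infDist (∑ j, α j • q j) (H : Set (Pt d))
        ≤ dist (∑ j, α j • q j) y := Metric.infDist_le_dist_of_mem hyH
      _ = ‖∑ j, α j • (q j - (orthogonalProjection H (q j) : Pt d))‖ := by
          rw [dist_eq_norm, hy, ← Finset.sum_sub_distrib]
          congr 1
          exact Finset.sum_congr rfl fun j _ => (smul_sub _ _ _).symm
      _ ≤ ∑ j, ‖α j • (q j - (orthogonalProjection H (q j) : Pt d))‖ :=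
          norm_sum_le _ _
      _ ≤ ∑ _j : Fin k, 2 ^ (k-1) * (x / k) := by
          apply Finset.sum_le_sum
          intro j _
          rw [norm_smul, Real.norm_eq_abs]
          have hw : ‖q j - (orthogonalProjection H (q j) : Pt d)‖ ≤ x / k := by
            rw [← infDist_eq_norm_sub_proj]
            exact hd j
          apply mul_le_mul (hb j) hw (norm_nonneg _) (by positivity)
      _ = k * (2 ^ (k-1) * (x / k)) := by
          rw [Finset.sum_const, Finset.card_univ, Fintype.card_fin, nsmul_eq_mul]
      _ = 2 ^ (k-1) * x := by
          field_simp
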